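/- Let m ≥ 1 and N = 2m. For x ∈ ℝ^N, define v ∈ ℝ^N by v_n = x_{2n} and v_{N−1−n} = x_{2n+1} for 0 ≤ n < m (the even–odd separation with the odd indices reversed). Then for every 0 ≤ k < N, the DCT coefficient satisfies Σ_{n=0}^{N−1} x_n · cos(π·(n+1/2)·k/N) = Re( exp(−iπk/(2N)) · Σ_{n=0}^{N−1} v_n · exp(−2πi·n·k/N) ). In other words, the DCT of x equals the real part of a diagonal rescaling of the DFT of the permuted vector v. -/
import Mathlib


/-- **The DCT as the real part of a rescaled DFT of a permuted vector.**
Let `N = 2m` and let `v` be obtained from `x ∈ ℝ^N` by even–odd separation with the odd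
indices reversed: `v_n = x_{2n}` and `v_{N−1−n} = x_{2n+1}` for `0 ≤ n < m`.  Then for every
`0 ≤ k < N`,
`Σ_n x_n cos(π(n+1/2)k/N) = Re( exp(−iπk/(2N)) · Σ_n v_n exp(−2πi·n·k/N) )`. -/
theorem dct_eq_re_scaled_dft (m : ℕ) (hm : 1 ≤ m) (N : ℕ) (hN : N = 2 * m)
    (x v : Fin N → ℝ)
    (hv : ∀ n : Fin m,
      v ⟨(n : ℕ), by have := n.isLt; omega⟩ = x ⟨2 * (n : ℕ), by have := n.isLt; omega⟩ ∧
      v ⟨N - 1 - (n : ℕ), by have := n.isLt; omega⟩ =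
        x ⟨2 * (n : ℕ) + 1, by have := n.isLt; omega⟩)
    (k : ℕ) (hk : k < N) :
    ∑ n : Fin N, x n * Real.cos (Real.pi * ((n : ℕ) + 1 / 2) * k / N) =
      (Complex.exp (-Complex.I * Real.pi * k / (2 * N)) *
        ∑ n : Fin N, (v n : ℂ) *
          Complex.exp (-2 * Real.pi * Complex.I * (n : ℕ) * k / N)).re := by
  classical
  have hNpos : 0 < N := by omega
  have hNR : (N : ℝ) ≠ 0 := Nat.cast_ne_zero.mpr (by omega)
  have hNC : (N : ℂ) ≠ 0 := Nat.cast_ne_zero.mpr (by omega)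
  -- the permutation
  set τ : Fin N → Fin N := fun n =>
    if h : (n : ℕ) < m then ⟨2 * (n : ℕ), by omega⟩
    else ⟨2 * (N - 1 - (n : ℕ)) + 1, by have := n.isLt; omega⟩ with hτdef
  have hvτ : ∀ n : Fin N, v n = x (τ n) := by
    intro n
    have hn := n.isLt
    by_cases h : (n : ℕ) < m
    · have h1 : v ⟨(n : ℕ), hn⟩ = x ⟨2 * (n : ℕ), by omega⟩ := (hv ⟨(n : ℕ), h⟩).1
      simp only [hτdef, dif_pos h]
      exact h1
    · have hj : N - 1 - (n : ℕ) < m := by omega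
      have h2 : v ⟨N - 1 - (N - 1 - (n : ℕ)), by omega⟩ =
          x ⟨2 * (N - 1 - (n : ℕ)) + 1, by omega⟩ := (hv ⟨N - 1 - (n : ℕ), hj⟩).2
      have hnn : n = (⟨N - 1 - (N - 1 - (n : ℕ)), by omega⟩ : Fin N) := Fin.ext (by simp; omega)
      simp only [hτdef, dif_neg h]
      conv_lhs => rw [hnn]
      exact h2
  have hbij : Function.Bijective τ := by
    rw [← Finite.injective_iff_bijective]
    intro a b hab
    have ha := a.isLt
    have hb := b.isLt
    simp only [hτdef] at hab
    apply Fin.ext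
    by_cases h1 : (a : ℕ) < m <;> by_cases h2 : (b : ℕ) < m
    · rw [dif_pos h1, dif_pos h2] at hab; simp only [Fin.mk.injEq] at hab; omega
    · rw [dif_pos h1, dif_neg h2] at hab; simp only [Fin.mk.injEq] at hab; omega
    · rw [dif_neg h1, dif_pos h2] at hab; simp only [Fin.mk.injEq] at hab; omega
    · rw [dif_neg h1, dif_neg h2] at hab; simp only [Fin.mk.injEq] at hab; omega
  -- rewrite RHS
  rw [Finset.mul_sum, Complex.re_sum]
  have key : ∀ n : Fin N,
      (Complex.exp (-Complex.I * Real.pi * k / (2 * N)) *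
        ((v n : ℂ) * Complex.exp (-2 * Real.pi * Complex.I * (n : ℕ) * k / N))).re
      = x (τ n) * Real.cos (Real.pi * (((τ n : Fin N) : ℕ) + 1 / 2) * k / N) := by
    intro n
    set θ : ℝ := Real.pi * k * (1 + 4 * (n : ℕ)) / (2 * N) with hθ
    have hexp : -Complex.I * Real.pi * k / (2 * N) + (-2 * Real.pi * Complex.I * (n : ℕ) * k / N)
        = (-θ : ℝ) * Complex.I := by
      rw [hθ]
      push_cast
      field_simp
      ring
    have hre : (Complex.exp (-Complex.I * Real.pi * k / (2 * N)) *
        ((v n : ℂ) * Complex.exp (-2 * Real.pi * Complex.I * (n : ℕ) * k / N))).re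
        = v n * Real.cos θ := by
      have : Complex.exp (-Complex.I * Real.pi * k / (2 * N)) *
          ((v n : ℂ) * Complex.exp (-2 * Real.pi * Complex.I * (n : ℕ) * k / N))
          = (v n : ℂ) * Complex.exp ((-θ : ℝ) * Complex.I) := by
        rw [← hexp, Complex.exp_add]; ring
      rw [this, Complex.re_ofReal_mul, Complex.exp_ofReal_mul_I_re, Real.cos_neg]
    rw [hre, hvτ n]
    congr 1
    by_cases h : (n : ℕ) < m
    · have hτn : ((τ n : Fin N) : ℕ) = 2 * (n : ℕ) := by
        simp only [hτdef, dif_pos h]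
      rw [hτn, hθ]
      congr 1
      push_cast
      field_simp
      ring
    · have hτn : ((τ n : Fin N) : ℕ) = 2 * (N - 1 - (n : ℕ)) + 1 := by
        simp only [hτdef, dif_neg h]
      rw [hτn, hθ]
      have hn := n.isLt
      have hcast : ((2 * (N - 1 - (n : ℕ)) + 1 : ℕ) : ℝ) = 2 * N - 1 - 2 * (n : ℕ) := by
        push_cast [Nat.cast_sub (by omega : (n : ℕ) ≤ N - 1), Nat.cast_sub (by omega : 1 ≤ N)]
        ring
      rw [hcast]
      have harg : Real.pi * (2 * (N : ℝ) - 1 - 2 * (n : ℕ) + 1 / 2) * k / N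
          = -(Real.pi * k * (1 + 4 * (n : ℕ)) / (2 * N)) + (k : ℤ) * (2 * Real.pi) := by
        push_cast
        field_simp
        ring
      rw [harg, Real.cos_add_int_mul_two_pi, Real.cos_neg]
  rw [Finset.sum_congr rfl (fun n _ => key n)]
  exact (Fintype.sum_bijective τ hbij
    (fun n => x (τ n) * Real.cos (Real.pi * (((τ n : Fin N) : ℕ) + 1 / 2) * k / N))
    (fun j => x j * Real.cos (Real.pi * ((j : ℕ) + 1 / 2) * k / N)) (fun n => rfl)).symm
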